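/- Let ρ be a density matrix on H_A ⊗ H_B ⊗ H_E, let {Π^a_x}_a, {Λ^b_y}_b be POVMs on H_A, H_B respectively, and let {Γ^{(a,b)}_{(x,y)}}_{a,b} be a POVM on H_E. If for a fixed pair (x,y) one has Σ_{a,b} Tr[(Π^a_x ⊗ Λ^b_y ⊗ Γ^{(a,b)}_{(x,y)}) ρ] = 1, then the post-measurement state of the reduced state ρ^{AB} = Tr_E ρ under the measurement (x,y) is unchanged: Σ_{a,b} (√(Π^a_x) ⊗ √(Λ^b_y)) ρ^{AB} (√(Π^a_x) ⊗ √(Λ^b_y)) = ρ^{AB}. -/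

import Mathlib

open Matrix ComplexOrder Kronecker

set_option linter.unusedSectionVars false
set_option maxHeartbeats 1600000

section Helpers

variable {m n p : Type*} [Fintype m] [Fintype n] [Fintype p]
  [DecidableEq m] [DecidableEq n] [DecidableEq p]

lemma kron_conjTranspose' (A : Matrix m m ℂ) (B : Matrix n n ℂ) :
    (A ⊗ₖ B)ᴴ = Aᴴ ⊗ₖ Bᴴ := by
  ext ⟨i, k⟩ ⟨j, l⟩
  simp [conjTranspose_apply, kroneckerMap_apply, mul_comm]

lemma kron_posSemidef' {A : Matrix m m ℂ} {B : Matrix n n ℂ}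
    (hA : A.PosSemidef) (hB : B.PosSemidef) : (A ⊗ₖ B).PosSemidef := by
  exact hA.kronecker hB

lemma trace_conjTranspose_mul_self_nonneg' (X : Matrix n n ℂ) : 0 ≤ (Xᴴ * X).trace := by
  have : (Xᴴ * X).trace = ((∑ j, ∑ i, Complex.normSq (X i j) : ℝ) : ℂ) := by
    simp only [trace, diag_apply, mul_apply, conjTranspose_apply]
    push_cast
    refine Finset.sum_congr rfl fun j _ => Finset.sum_congr rfl fun i _ => ?_
    rw [show star (X i j) = (starRingEnd ℂ) (X i j) from rfl, mul_comm, Complex.mul_conj]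
  rw [this]
  exact_mod_cast Complex.zero_le_real.mpr
    (Finset.sum_nonneg fun j _ => Finset.sum_nonneg fun i _ => Complex.normSq_nonneg _)

lemma eq_zero_of_trace_conjTranspose_mul_self' (X : Matrix n n ℂ)
    (h : (Xᴴ * X).trace = 0) : X = 0 := by
  have h2 : (Xᴴ * X).trace = ((∑ j, ∑ i, Complex.normSq (X i j) : ℝ) : ℂ) := by
    simp only [trace, diag_apply, mul_apply, conjTranspose_apply]
    push_cast
    refine Finset.sum_congr rfl fun j _ => Finset.sum_congr rfl fun i _ => ?_
    rw [show star (X i j) = (starRingEnd ℂ) (X i j) from rfl, mul_comm, Complex.mul_conj]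
  rw [h2] at h
  have h3 : (∑ j, ∑ i, Complex.normSq (X i j) : ℝ) = 0 := by exact_mod_cast h
  ext i j
  have := (Finset.sum_eq_zero_iff_of_nonneg
    (fun j _ => Finset.sum_nonneg fun i _ => Complex.normSq_nonneg _)).mp h3 j (Finset.mem_univ j)
  have := (Finset.sum_eq_zero_iff_of_nonneg
    (fun i _ => Complex.normSq_nonneg _)).mp this i (Finset.mem_univ i)
  simpa [Complex.normSq_eq_zero] using this

lemma comm_of_sq_comm' {K σ : Matrix n n ℂ} (hK : K.PosSemidef)
    (h : K * K * σ = σ * (K * K)) : K * σ = σ * K := by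
  have hH := hK.1
  set U : Matrix n n ℂ := (hH.eigenvectorUnitary : Matrix n n ℂ) with hU
  set d : n → ℂ := RCLike.ofReal ∘ hH.eigenvalues with hd
  set D : Matrix n n ℂ := diagonal d with hD
  have hsp : K = U * D * star U := hH.spectral_theorem
  have hUU : star U * U = 1 := UnitaryGroup.star_mul_self _
  have hUU' : U * star U = 1 := mul_eq_one_comm.mp hUU
  have cancel1 : ∀ X : Matrix n n ℂ, U * (star U * X) = X := fun X => by
    rw [← Matrix.mul_assoc, hUU', Matrix.one_mul]
  have cancel2 : ∀ X : Matrix n n ℂ, star U * (U * X) = X := fun X => by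
    rw [← Matrix.mul_assoc, hUU, Matrix.one_mul]
  have h' := h
  rw [hsp] at h'
  have h2 := congrArg (fun X => star U * (X * U)) h'
  simp only [Matrix.mul_assoc, cancel2, hUU, Matrix.mul_one] at h2
  have key : D * (D * (star U * (σ * U))) = star U * (σ * U) * (D * D) := by
    simp only [Matrix.mul_assoc]; exact h2
  have key2 : D * (star U * (σ * U)) = star U * (σ * U) * D := by
    set S : Matrix n n ℂ := star U * (σ * U) with hS
    rw [hD] at key ⊢
    rw [show diagonal d * diagonal d = diagonal (fun i => d i * d i) from by
      rw [diagonal_mul_diagonal]] at key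
    ext i j
    have hk := congrFun (congrFun key i) j
    simp only [Matrix.diagonal_mul, Matrix.mul_diagonal] at hk ⊢
    rcases eq_or_ne (S i j) 0 with h0 | h0
    · simp [h0]
    · have hdd : d i * d i = d j * d j := by
        have hk' : d i * d i * S i j = d j * d j * S i j := by
          calc d i * d i * S i j = d i * (d i * S i j) := by ring
            _ = S i j * (d j * d j) := hk
            _ = d j * d j * S i j := by ring
        exact mul_right_cancel₀ h0 hk'
      have hde : d i = d j := by
        rw [hd] at hdd ⊢
        simp only [Function.comp_apply] at hdd ⊢
        have hi := hK.eigenvalues_nonneg i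
        have hj := hK.eigenvalues_nonneg j
        set a := hH.eigenvalues i
        set b := hH.eigenvalues j
        have hab : a * a = b * b := by exact_mod_cast hdd
        have : a = b := by
          have h4 : (a - b) * (a + b) = 0 := by nlinarith
          rcases mul_eq_zero.mp h4 with h5 | h5
          · linarith
          · have ha0 : a = 0 := by linarith
            have hb0 : b = 0 := by linarith
            rw [ha0, hb0]
        exact_mod_cast congrArg (RCLike.ofReal : ℝ → ℂ) this
      rw [hde]; ring
  have key3 := congrArg (fun X => U * (X * star U)) key2
  simp only [Matrix.mul_assoc, cancel1, hUU', Matrix.mul_one] at key3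
  rw [hsp]
  simp only [Matrix.mul_assoc]
  exact key3

lemma sum_kronecker_left' {ι : Type*} (s : Finset ι) (A : ι → Matrix m m ℂ)
    (B : Matrix p p ℂ) : (∑ i ∈ s, A i) ⊗ₖ B = ∑ i ∈ s, A i ⊗ₖ B := by
  ext ⟨i, k⟩ ⟨j, l⟩
  simp [kroneckerMap_apply, Matrix.sum_apply, Finset.sum_mul]

lemma sum_kronecker_right' {ι : Type*} (s : Finset ι) (A : Matrix m m ℂ)
    (B : ι → Matrix p p ℂ) : A ⊗ₖ (∑ i ∈ s, B i) = ∑ i ∈ s, A ⊗ₖ B i := by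
  ext ⟨i, k⟩ ⟨j, l⟩
  simp [kroneckerMap_apply, Matrix.sum_apply, Finset.mul_sum]

end Helpers

noncomputable def ptr {m p : Type*} [Fintype p] (ρ : Matrix (m × p) (m × p) ℂ) :
    Matrix m m ℂ :=
  fun i j => ∑ k, ρ (i, k) (j, k)

section PtrLemmas

variable {m p : Type*} [Fintype m] [Fintype p] [DecidableEq m] [DecidableEq p]

lemma ptr_left (A : Matrix m m ℂ) (ρ : Matrix (m × p) (m × p) ℂ) :
    ptr ((A ⊗ₖ (1 : Matrix p p ℂ)) * ρ) = A * ptr ρ := by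
  ext i j
  simp only [ptr, mul_apply, kroneckerMap_apply, one_apply, Fintype.sum_prod_type,
    mul_ite, mul_one, mul_zero, ite_mul, zero_mul, Finset.sum_ite_eq, Finset.sum_ite_eq',
    Finset.mem_univ, if_true]
  rw [Finset.sum_comm]
  exact Finset.sum_congr rfl fun q _ => (Finset.mul_sum ..).symm

lemma ptr_right (A : Matrix m m ℂ) (ρ : Matrix (m × p) (m × p) ℂ) :
    ptr (ρ * (A ⊗ₖ (1 : Matrix p p ℂ))) = ptr ρ * A := by
  ext i j
  simp only [ptr, mul_apply, kroneckerMap_apply, one_apply, Fintype.sum_prod_type,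
    mul_ite, mul_one, mul_zero, ite_mul, zero_mul,
    Finset.sum_ite_eq, Finset.sum_ite_eq', Finset.mem_univ, if_true]
  rw [Finset.sum_comm]
  exact Finset.sum_congr rfl fun q _ => (Finset.sum_mul ..).symm

lemma ptr_cyc (B : Matrix p p ℂ) (ρ : Matrix (m × p) (m × p) ℂ) :
    ptr (((1 : Matrix m m ℂ) ⊗ₖ B) * ρ) = ptr (ρ * ((1 : Matrix m m ℂ) ⊗ₖ B)) := by
  ext i j
  simp only [ptr, mul_apply, kroneckerMap_apply, one_apply, Fintype.sum_prod_type,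
    mul_ite, mul_one, mul_zero, ite_mul, zero_mul, one_mul,
    Finset.sum_ite_eq, Finset.sum_ite_eq', Finset.mem_univ, if_true]
  have L : ∀ x : p, (∑ x_1 : m, ∑ x_2 : p, if i = x_1 then B x x_2 * ρ (x_1, x_2) (j, x) else 0)
      = ∑ x_2 : p, B x x_2 * ρ (i, x_2) (j, x) := by
    intro x
    rw [Finset.sum_comm]
    simp [Finset.sum_ite_eq]
  have R : ∀ x : p, (∑ x_1 : m, ∑ x_2 : p, if x_1 = j then ρ (i, x) (x_1, x_2) * B x_2 x else 0)
      = ∑ x_2 : p, ρ (i, x) (j, x_2) * B x_2 x := by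
    intro x
    rw [Finset.sum_comm]
    simp [Finset.sum_ite_eq']
  simp only [L, R]
  rw [Finset.sum_comm]
  exact Finset.sum_congr rfl fun k _ => Finset.sum_congr rfl fun l _ => mul_comm _ _

end PtrLemmas

/-- Partial trace over the third (Eve) tensor factor. -/
noncomputable def ptE {dA dB dE : ℕ}
    (ρ : Matrix ((Fin dA × Fin dB) × Fin dE) ((Fin dA × Fin dB) × Fin dE) ℂ) :
    Matrix (Fin dA × Fin dB) (Fin dA × Fin dB) ℂ :=
  fun i j => ∑ k : Fin dE, ρ (i, k) (j, k)

namespace Matrix.PosSemidef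

/-- The positive semidefinite square root of a positive semidefinite matrix
(the definition from the older Mathlib, removed since). -/
noncomputable def sqrt {n 𝕜 : Type*} [Fintype n] [RCLike 𝕜] [DecidableEq n]
    {A : Matrix n n 𝕜} (hA : A.PosSemidef) : Matrix n n 𝕜 :=
  (hA.1.eigenvectorUnitary : Matrix n n 𝕜) *
    diagonal (fun i => ((Real.sqrt (hA.1.eigenvalues i) : ℝ) : 𝕜)) *
    (star hA.1.eigenvectorUnitary : Matrix n n 𝕜)

lemma posSemidef_sqrt {n 𝕜 : Type*} [Fintype n] [RCLike 𝕜] [DecidableEq n]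
    {A : Matrix n n 𝕜} (hA : A.PosSemidef) : hA.sqrt.PosSemidef := by
  have hd : (diagonal (fun i => ((Real.sqrt (hA.1.eigenvalues i) : ℝ) : 𝕜))).PosSemidef :=
    posSemidef_diagonal_iff.mpr fun i => RCLike.ofReal_nonneg.mpr (Real.sqrt_nonneg _)
  exact hd.mul_mul_conjTranspose_same (hA.1.eigenvectorUnitary : Matrix n n 𝕜)

lemma sqrt_mul_self {n 𝕜 : Type*} [Fintype n] [RCLike 𝕜] [DecidableEq n]
    {A : Matrix n n 𝕜} (hA : A.PosSemidef) : hA.sqrt * hA.sqrt = A := by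
  have hUU : (star hA.1.eigenvectorUnitary : Matrix n n 𝕜) *
      (hA.1.eigenvectorUnitary : Matrix n n 𝕜) = 1 := UnitaryGroup.star_mul_self _
  have hD : diagonal (fun i => ((Real.sqrt (hA.1.eigenvalues i) : ℝ) : 𝕜)) *
      diagonal (fun i => ((Real.sqrt (hA.1.eigenvalues i) : ℝ) : 𝕜))
      = diagonal (RCLike.ofReal ∘ hA.1.eigenvalues) := by
    rw [diagonal_mul_diagonal]
    congr 1
    ext i
    rw [Function.comp_apply, ← RCLike.ofReal_mul, Real.mul_self_sqrt (hA.eigenvalues_nonneg i)]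
  have hsp : A = (hA.1.eigenvectorUnitary : Matrix n n 𝕜) *
      diagonal (RCLike.ofReal ∘ hA.1.eigenvalues) *
      (star hA.1.eigenvectorUnitary : Matrix n n 𝕜) := hA.1.spectral_theorem
  unfold sqrt
  conv_rhs => rw [hsp, ← hD]
  simp only [Matrix.mul_assoc]
  rw [← Matrix.mul_assoc (star _ : Matrix n n 𝕜) (hA.1.eigenvectorUnitary : Matrix n n 𝕜), hUU,
    Matrix.one_mul]
end Matrix.PosSemidef


/-- If Eve's measurement perfectly predicts Alice's and Bob's joint outcomes for the
input pair `(x, y)`, then the corresponding local measurement does not disturb the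
reduced state `ρ^{AB}`. -/
theorem perfect_guessing_no_disturbance {dA dB dE oA oB : ℕ}
    (ρ : Matrix ((Fin dA × Fin dB) × Fin dE) ((Fin dA × Fin dB) × Fin dE) ℂ)
    (hρ : ρ.PosSemidef) (hρtr : ρ.trace = 1)
    (Pi : Fin oA → Matrix (Fin dA) (Fin dA) ℂ)
    (Λ : Fin oB → Matrix (Fin dB) (Fin dB) ℂ)
    (Γ : Fin oA × Fin oB → Matrix (Fin dE) (Fin dE) ℂ)
    (hPi : ∀ a, (Pi a).PosSemidef) (hPisum : ∑ a, Pi a = 1)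
    (hΛ : ∀ b, (Λ b).PosSemidef) (hΛsum : ∑ b, Λ b = 1)
    (hΓ : ∀ ab, (Γ ab).PosSemidef) (hΓsum : ∑ ab, Γ ab = 1)
    (hguess : ∑ a, ∑ b, (((Pi a ⊗ₖ Λ b) ⊗ₖ Γ (a, b)) * ρ).trace = 1) :
    ∑ a, ∑ b, ((hPi a).sqrt ⊗ₖ (hΛ b).sqrt) * ptE ρ * ((hPi a).sqrt ⊗ₖ (hΛ b).sqrt)
      = ptE ρ := by
  classical
  -- notation
  set M : Fin oA × Fin oB → Matrix (Fin dA × Fin dB) (Fin dA × Fin dB) ℂ :=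
    fun q => Pi q.1 ⊗ₖ Λ q.2 with hM
  set K : Fin oA × Fin oB → Matrix (Fin dA × Fin dB) (Fin dA × Fin dB) ℂ :=
    fun q => (hPi q.1).sqrt ⊗ₖ (hΛ q.2).sqrt with hKdef
  set R : Matrix ((Fin dA × Fin dB) × Fin dE) ((Fin dA × Fin dB) × Fin dE) ℂ :=
    hρ.sqrt with hRdef
  have hR2 : R * R = ρ := hρ.sqrt_mul_self
  have hRH : Rᴴ = R := hρ.posSemidef_sqrt.1
  have hK2 : ∀ q, K q * K q = M q := by
    intro q
    rw [hKdef, hM]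
    simp only [← mul_kronecker_mul, PosSemidef.sqrt_mul_self]
  have hKpsd : ∀ q, (K q).PosSemidef := fun q =>
    kron_posSemidef' (hPi q.1).posSemidef_sqrt (hΛ q.2).posSemidef_sqrt
  have hMpsd : ∀ q, (M q).PosSemidef := fun q => kron_posSemidef' (hPi q.1) (hΛ q.2)
  set P : Fin oA × Fin oB → Fin oA × Fin oB →
      Matrix ((Fin dA × Fin dB) × Fin dE) ((Fin dA × Fin dB) × Fin dE) ℂ :=
    fun q r => K q ⊗ₖ (hΓ r).sqrt with hPdef
  have hPpsd : ∀ q r, (P q r).PosSemidef := fun q r =>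
    kron_posSemidef' (hKpsd q) (hΓ r).posSemidef_sqrt
  have hP2 : ∀ q r, P q r * P q r = M q ⊗ₖ Γ r := by
    intro q r
    rw [hPdef]
    simp only [← mul_kronecker_mul, PosSemidef.sqrt_mul_self, hK2]
  -- the joint probabilities
  set t : Fin oA × Fin oB → Fin oA × Fin oB → ℂ :=
    fun q r => ((M q ⊗ₖ Γ r) * ρ).trace with htdef
  have htX : ∀ q r, ((P q r * R)ᴴ * (P q r * R)).trace = t q r := by
    intro q r
    rw [conjTranspose_mul, hRH, (hPpsd q r).1]
    calc (R * P q r * (P q r * R)).trace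
        = (R * (P q r * P q r * R)).trace := by simp only [Matrix.mul_assoc]
      _ = (P q r * P q r * R * R).trace := by rw [trace_mul_comm]
      _ = ((M q ⊗ₖ Γ r) * ρ).trace := by rw [Matrix.mul_assoc, hR2, hP2]
  have hnn : ∀ q r, 0 ≤ t q r := fun q r =>
    (htX q r) ▸ trace_conjTranspose_mul_self_nonneg' _
  -- total sum is 1
  have hNsum : ∑ q : Fin oA × Fin oB, ∑ r : Fin oA × Fin oB, (M q ⊗ₖ Γ r) = 1 := by
    have h1 : ∀ q, ∑ r : Fin oA × Fin oB, (M q ⊗ₖ Γ r)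
        = M q ⊗ₖ (1 : Matrix (Fin dE) (Fin dE) ℂ) := by
      intro q
      rw [← sum_kronecker_right', hΓsum]
    simp only [h1]
    rw [← sum_kronecker_left']
    have hMsum : ∑ q : Fin oA × Fin oB, M q = 1 := by
      rw [Fintype.sum_prod_type]
      have h2 : ∀ a, ∑ b, M (a, b) = Pi a ⊗ₖ (1 : Matrix (Fin dB) (Fin dB) ℂ) := by
        intro a
        rw [hM]
        simp only
        rw [← sum_kronecker_right', hΛsum]
      simp only [h2]
      rw [← sum_kronecker_left', hPisum, one_kronecker_one]
    rw [hMsum, one_kronecker_one]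
  have htot : ∑ q : Fin oA × Fin oB, ∑ r : Fin oA × Fin oB, t q r = 1 := by
    have : ∑ q : Fin oA × Fin oB, ∑ r : Fin oA × Fin oB, t q r
        = ((∑ q : Fin oA × Fin oB, ∑ r : Fin oA × Fin oB, (M q ⊗ₖ Γ r)) * ρ).trace := by
      simp only [htdef, Finset.sum_mul, trace_sum]
    rw [this, hNsum, Matrix.one_mul, hρtr]
  have hdiag : ∑ q : Fin oA × Fin oB, t q q = 1 := by
    rw [Fintype.sum_prod_type]
    exact hguess
  -- off-diagonal probabilities vanish
  have hoff : ∀ q r, q ≠ r → t q r = 0 := by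
    have hzero : ∑ q : Fin oA × Fin oB, ∑ r ∈ Finset.univ.erase q, t q r = 0 := by
      have h1 : ∀ q : Fin oA × Fin oB, ∑ r ∈ Finset.univ.erase q, t q r
          = (∑ r : Fin oA × Fin oB, t q r) - t q q := fun q =>
        Finset.sum_erase_eq_sub (Finset.mem_univ q)
      simp only [h1]
      rw [Finset.sum_sub_distrib, htot, hdiag, sub_self]
    intro q r hqr
    have h2 := (Finset.sum_eq_zero_iff_of_nonneg
      (fun q _ => Finset.sum_nonneg fun r _ => hnn q r)).mp hzero q (Finset.mem_univ q)
    exact (Finset.sum_eq_zero_iff_of_nonneg (fun r _ => hnn q r)).mp h2 r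
      (Finset.mem_erase.mpr ⟨hqr.symm, Finset.mem_univ r⟩)
  -- hence the corresponding operators annihilate ρ
  have hPR0 : ∀ q r, q ≠ r → P q r * R = 0 := by
    intro q r hqr
    exact eq_zero_of_trace_conjTranspose_mul_self' _ (by rw [htX q r]; exact hoff q r hqr)
  have hMΓρ : ∀ q r, q ≠ r → (M q ⊗ₖ Γ r) * ρ = 0 := by
    intro q r hqr
    calc (M q ⊗ₖ Γ r) * ρ = P q r * P q r * (R * R) := by rw [hP2, hR2]
      _ = P q r * (P q r * R) * R := by simp only [Matrix.mul_assoc]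
      _ = 0 := by rw [hPR0 q r hqr, Matrix.mul_zero, Matrix.zero_mul]
  have hρMΓ : ∀ q r, q ≠ r → ρ * (M q ⊗ₖ Γ r) = 0 := by
    intro q r hqr
    have h1 := congrArg conjTranspose (hMΓρ q r hqr)
    rwa [conjTranspose_mul, hρ.1.eq, conjTranspose_zero,
      (kron_posSemidef' (hMpsd q) (hΓ r)).1.eq] at h1
  -- no-signalling style identities
  have hdiagρL : ∀ q, (M q ⊗ₖ (1 : Matrix (Fin dE) (Fin dE) ℂ)) * ρ
      = ((1 : Matrix (Fin dA × Fin dB) (Fin dA × Fin dB) ℂ) ⊗ₖ Γ q) * ρ := by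
    intro q
    have h1 : (M q ⊗ₖ (1 : Matrix (Fin dE) (Fin dE) ℂ)) * ρ = (M q ⊗ₖ Γ q) * ρ := by
      rw [← hΓsum, sum_kronecker_right', Finset.sum_mul]
      exact Finset.sum_eq_single q (fun r _ hr => hMΓρ q r (Ne.symm hr))
        (fun h => absurd (Finset.mem_univ q) h)
    have h2 : ((1 : Matrix (Fin dA × Fin dB) (Fin dA × Fin dB) ℂ) ⊗ₖ Γ q) * ρ
        = (M q ⊗ₖ Γ q) * ρ := by
      have hMsum : ∑ r : Fin oA × Fin oB, M r = 1 := by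
        rw [Fintype.sum_prod_type]
        have h2' : ∀ a, ∑ b, M (a, b) = Pi a ⊗ₖ (1 : Matrix (Fin dB) (Fin dB) ℂ) := by
          intro a
          rw [hM]
          simp only
          rw [← sum_kronecker_right', hΛsum]
        simp only [h2']
        rw [← sum_kronecker_left', hPisum, one_kronecker_one]
      rw [← hMsum, sum_kronecker_left', Finset.sum_mul]
      exact Finset.sum_eq_single q (fun r _ hr => hMΓρ r q hr)
        (fun h => absurd (Finset.mem_univ q) h)
    rw [h1, h2]
  have hdiagρR : ∀ q, ρ * (M q ⊗ₖ (1 : Matrix (Fin dE) (Fin dE) ℂ))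
      = ρ * ((1 : Matrix (Fin dA × Fin dB) (Fin dA × Fin dB) ℂ) ⊗ₖ Γ q) := by
    intro q
    have h1 : ρ * (M q ⊗ₖ (1 : Matrix (Fin dE) (Fin dE) ℂ)) = ρ * (M q ⊗ₖ Γ q) := by
      rw [← hΓsum, sum_kronecker_right', Finset.mul_sum]
      exact Finset.sum_eq_single q (fun r _ hr => hρMΓ q r (Ne.symm hr))
        (fun h => absurd (Finset.mem_univ q) h)
    have h2 : ρ * ((1 : Matrix (Fin dA × Fin dB) (Fin dA × Fin dB) ℂ) ⊗ₖ Γ q)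
        = ρ * (M q ⊗ₖ Γ q) := by
      have hMsum : ∑ r : Fin oA × Fin oB, M r = 1 := by
        rw [Fintype.sum_prod_type]
        have h2' : ∀ a, ∑ b, M (a, b) = Pi a ⊗ₖ (1 : Matrix (Fin dB) (Fin dB) ℂ) := by
          intro a
          rw [hM]
          simp only
          rw [← sum_kronecker_right', hΛsum]
        simp only [h2']
        rw [← sum_kronecker_left', hPisum, one_kronecker_one]
      rw [← hMsum, sum_kronecker_left', Finset.mul_sum]
      exact Finset.sum_eq_single q (fun r _ hr => hρMΓ r q hr)
        (fun h => absurd (Finset.mem_univ q) h)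
    rw [h1, h2]
  -- the reduced state commutes with the measurement operators
  have hpt : ptE ρ = ptr ρ := rfl
  have hcomm : ∀ q, M q * ptr ρ = ptr ρ * M q := by
    intro q
    calc M q * ptr ρ = ptr ((M q ⊗ₖ (1 : Matrix (Fin dE) (Fin dE) ℂ)) * ρ) :=
          (ptr_left _ _).symm
      _ = ptr (((1 : Matrix (Fin dA × Fin dB) (Fin dA × Fin dB) ℂ) ⊗ₖ Γ q) * ρ) := by
          rw [hdiagρL]
      _ = ptr (ρ * ((1 : Matrix (Fin dA × Fin dB) (Fin dA × Fin dB) ℂ) ⊗ₖ Γ q)) :=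
          ptr_cyc _ _
      _ = ptr (ρ * (M q ⊗ₖ (1 : Matrix (Fin dE) (Fin dE) ℂ))) := by rw [← hdiagρR]
      _ = ptr ρ * M q := ptr_right _ _
  have hcommK : ∀ q, K q * ptr ρ = ptr ρ * K q := by
    intro q
    exact comm_of_sq_comm' (hKpsd q) (by rw [hK2 q]; exact hcomm q)
  -- conclude
  rw [hpt, ← Fintype.sum_prod_type
    (f := fun q : Fin oA × Fin oB => K q * ptr ρ * K q)]
  have hfin : ∀ q : Fin oA × Fin oB, K q * ptr ρ * K q = ptr ρ * M q := by
    intro q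
    rw [hcommK q, Matrix.mul_assoc, hK2 q]
  simp only [hfin]
  rw [← Finset.mul_sum]
  have hMsum : ∑ q : Fin oA × Fin oB, M q = 1 := by
    rw [Fintype.sum_prod_type]
    have h2' : ∀ a, ∑ b, M (a, b) = Pi a ⊗ₖ (1 : Matrix (Fin dB) (Fin dB) ℂ) := by
      intro a
      rw [hM]
      simp only
      rw [← sum_kronecker_right', hΛsum]
    simp only [h2']
    rw [← sum_kronecker_left', hPisum, one_kronecker_one]
  rw [hMsum, Matrix.mul_one]
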